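/- Let H₀ be a complex Hilbert space, let q and c be real numbers with 0 < q < 1 and c ≥ 0, let ε ∈ {+1, −1}, and assume c > 0 if ε = −1. Set λ_ε := 1/2 + ε(c + 1/4)^{1/2} and c_ε(n) := (c + λ_ε q^{2n} − (λ_ε q^{2n})²)^{1/2} for n ∈ ℕ. Then there exist bounded operators A and B on ℓ²(ℕ, H₀), with A self-adjoint, such that for all n ∈ ℕ and η ∈ H₀: A(eₙ(η)) = λ_ε q^{2n} eₙ(η), B(e₀(η)) = 0, B(eₙ(η)) = c_ε(n) eₙ₋₁(η) for n ≥ 1, and B*(eₙ(η)) = c_ε(n+1) eₙ₊₁(η); and these operators satisfy the Podles' sphere relations AB = q^{−2}BA, AB* = q²B*A, B*B = A − A² + c·1, and BB* = q²A − q⁴A² + c·1. -/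

import Mathlib

open ContinuousLinearMap

set_option linter.unusedSectionVars false

noncomputable section PodlesAux

variable {H₀ : Type*} [NormedAddCommGroup H₀] [InnerProductSpace ℂ H₀] [CompleteSpace H₀]

local notation "ℓ2" => lp (fun _ : ℕ => H₀) 2

lemma podles_toReal_two : (2 : ENNReal).toReal = 2 := by norm_num

lemma podles_summable_sq (f : ℓ2) : Summable fun n => ‖f n‖ ^ 2 := by
  have h := (lp.memℓp f).summable (p := 2) (by norm_num [podles_toReal_two])
  simpa [podles_toReal_two, Real.rpow_two] using h

lemma podles_memℓp_two {g : ∀ _ : ℕ, H₀} (h : Summable fun n => ‖g n‖ ^ 2) :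
    Memℓp g 2 := by
  apply memℓp_gen
  simpa [podles_toReal_two, Real.rpow_two] using h

lemma podles_norm_sq_eq (f : ℓ2) : ‖f‖ ^ 2 = ∑' n, ‖f n‖ ^ 2 := by
  have h := lp.norm_rpow_eq_tsum (p := 2) (by norm_num [podles_toReal_two]) f
  simpa [podles_toReal_two, Real.rpow_two] using h

lemma podles_norm_le_bound (g f : ℓ2) (M : ℝ) (hM : 0 ≤ M)
    (h : ∑' n, ‖g n‖ ^ 2 ≤ M ^ 2 * ‖f‖ ^ 2) : ‖g‖ ≤ M * ‖f‖ := by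
  have h2 : ‖g‖ ^ 2 ≤ (M * ‖f‖) ^ 2 := by
    rw [podles_norm_sq_eq, mul_pow]; exact h
  have hg : (0:ℝ) ≤ ‖g‖ := norm_nonneg _
  have hf : (0:ℝ) ≤ M * ‖f‖ := mul_nonneg hM (norm_nonneg _)
  nlinarith

lemma podles_smul_norm_sq (w : ℝ) (M : ℝ) (hM : |w| ≤ M) (v : H₀) :
    ‖(w : ℂ) • v‖ ^ 2 ≤ M ^ 2 * ‖v‖ ^ 2 := by
  rw [norm_smul, Complex.norm_real, Real.norm_eq_abs, mul_pow]
  exact mul_le_mul_of_nonneg_right (pow_le_pow_left₀ (abs_nonneg w) hM 2) (sq_nonneg _)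

/-- diagonal operator -/
def podlesDiag (w : ℕ → ℝ) (M : ℝ) (hM : ∀ n, |w n| ≤ M) : ℓ2 →L[ℂ] ℓ2 :=
  have hM0 : 0 ≤ M := le_trans (abs_nonneg _) (hM 0)
  have hsum : ∀ f : ℓ2, Summable fun n => ‖(w n : ℂ) • f n‖ ^ 2 := fun f =>
    Summable.of_nonneg_of_le (fun n => sq_nonneg _)
      (fun n => podles_smul_norm_sq (w n) M (hM n) (f n))
      ((podles_summable_sq f).mul_left (M ^ 2))
  LinearMap.mkContinuous
    { toFun := fun f => (⟨fun n => (w n : ℂ) • f n, podles_memℓp_two (hsum f)⟩ : ℓ2)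
      map_add' := fun f g => by
        apply lp.ext; funext n
        simp only [lp.coeFn_add, Pi.add_apply, smul_add]
      map_smul' := fun s f => by
        apply lp.ext; funext n
        simp only [lp.coeFn_smul, Pi.smul_apply, RingHom.id_apply]
        rw [smul_comm] }
    M
    (fun f => by
      apply podles_norm_le_bound _ f M hM0
      calc ∑' n, ‖(w n : ℂ) • f n‖ ^ 2
          ≤ ∑' n, M ^ 2 * ‖f n‖ ^ 2 :=
            Summable.tsum_le_tsum (fun n => podles_smul_norm_sq (w n) M (hM n) (f n)) (hsum f)
              ((podles_summable_sq f).mul_left (M ^ 2))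
        _ = M ^ 2 * ‖f‖ ^ 2 := by rw [tsum_mul_left, podles_norm_sq_eq])

@[simp] lemma podlesDiag_apply (w : ℕ → ℝ) (M : ℝ) (hM : ∀ n, |w n| ≤ M) (f : ℓ2) (n : ℕ) :
    (podlesDiag w M hM f) n = (w n : ℂ) • f n := rfl

/-- lowering operator : (B f) n = w (n+1) • f (n+1) -/
def podlesDown (w : ℕ → ℝ) (M : ℝ) (hM : ∀ n, |w n| ≤ M) : ℓ2 →L[ℂ] ℓ2 :=
  have hM0 : 0 ≤ M := le_trans (abs_nonneg _) (hM 0)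
  have hsum : ∀ f : ℓ2, Summable fun n => ‖(w (n+1) : ℂ) • f (n+1)‖ ^ 2 := fun f =>
    Summable.of_nonneg_of_le (fun n => sq_nonneg _)
      (fun n => podles_smul_norm_sq (w (n+1)) M (hM (n+1)) (f (n+1)))
      (((summable_nat_add_iff 1).mpr (podles_summable_sq f)).mul_left (M ^ 2))
  have keyt : ∀ f : ℓ2, ∑' n, ‖(w (n+1) : ℂ) • f (n+1)‖ ^ 2 ≤ M ^ 2 * ‖f‖ ^ 2 := fun f => by
    have hs1 : Summable fun n => ‖f (n+1)‖ ^ 2 := (summable_nat_add_iff 1).mpr (podles_summable_sq f)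
    calc ∑' n, ‖(w (n+1) : ℂ) • f (n+1)‖ ^ 2
        ≤ ∑' n, M ^ 2 * ‖f (n+1)‖ ^ 2 :=
          Summable.tsum_le_tsum (fun n => podles_smul_norm_sq _ M (hM (n+1)) _) (hsum f)
            (hs1.mul_left (M ^ 2))
      _ = M ^ 2 * ∑' n, ‖f (n+1)‖ ^ 2 := tsum_mul_left
      _ ≤ M ^ 2 * ∑' n, ‖f n‖ ^ 2 := by
          apply mul_le_mul_of_nonneg_left _ (sq_nonneg M)
          rw [Summable.tsum_eq_zero_add (podles_summable_sq f)]
          exact le_add_of_nonneg_left (sq_nonneg _)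
      _ = M ^ 2 * ‖f‖ ^ 2 := by rw [podles_norm_sq_eq]
  LinearMap.mkContinuous
    { toFun := fun f => (⟨fun n => (w (n+1) : ℂ) • f (n+1), podles_memℓp_two (hsum f)⟩ : ℓ2)
      map_add' := fun f g => by
        apply lp.ext; funext n
        simp only [lp.coeFn_add, Pi.add_apply, smul_add]
      map_smul' := fun s f => by
        apply lp.ext; funext n
        simp only [lp.coeFn_smul, Pi.smul_apply, RingHom.id_apply]
        rw [smul_comm] }
    M
    (fun f => podles_norm_le_bound _ f M hM0 (keyt f))

@[simp] lemma podlesDown_apply (w : ℕ → ℝ) (M : ℝ) (hM : ∀ n, |w n| ≤ M) (f : ℓ2) (n : ℕ) :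
    (podlesDown w M hM f) n = (w (n+1) : ℂ) • f (n+1) := rfl

/-- raw raising map -/
def podlesUpFun (w : ℕ → ℝ) (f : ∀ _ : ℕ, H₀) : ∀ _ : ℕ, H₀
  | 0 => 0
  | n+1 => (w (n+1) : ℂ) • f n

@[simp] lemma podlesUpFun_zero (w : ℕ → ℝ) (f : ∀ _ : ℕ, H₀) : podlesUpFun w f 0 = 0 := rfl
@[simp] lemma podlesUpFun_succ (w : ℕ → ℝ) (f : ∀ _ : ℕ, H₀) (n : ℕ) :
    podlesUpFun w f (n+1) = (w (n+1) : ℂ) • f n := rfl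

/-- raising operator -/
def podlesUp (w : ℕ → ℝ) (M : ℝ) (hM : ∀ n, |w n| ≤ M) : ℓ2 →L[ℂ] ℓ2 :=
  have hM0 : 0 ≤ M := le_trans (abs_nonneg _) (hM 0)
  have hsum : ∀ f : ℓ2, Summable fun n => ‖podlesUpFun w f n‖ ^ 2 := fun f => by
    apply (summable_nat_add_iff 1).mp
    exact Summable.of_nonneg_of_le (fun n => sq_nonneg _)
      (fun n => by
        simpa using podles_smul_norm_sq (w (n+1)) M (hM (n+1)) (f n))
      ((podles_summable_sq f).mul_left (M ^ 2))
  have keyt : ∀ f : ℓ2, ∑' n, ‖podlesUpFun w f n‖ ^ 2 ≤ M ^ 2 * ‖f‖ ^ 2 := fun f => by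
    rw [Summable.tsum_eq_zero_add (hsum f)]
    simp only [podlesUpFun_zero, podlesUpFun_succ, norm_zero]
    rw [zero_pow (by norm_num), zero_add]
    calc ∑' n, ‖(w (n+1) : ℂ) • f n‖ ^ 2
        ≤ ∑' n, M ^ 2 * ‖f n‖ ^ 2 :=
          Summable.tsum_le_tsum (fun n => podles_smul_norm_sq _ M (hM (n+1)) _)
            (by simpa using (summable_nat_add_iff 1).mpr (hsum f))
            ((podles_summable_sq f).mul_left (M ^ 2))
      _ = M ^ 2 * ‖f‖ ^ 2 := by rw [tsum_mul_left, podles_norm_sq_eq]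
  LinearMap.mkContinuous
    { toFun := fun f => (⟨podlesUpFun w f, podles_memℓp_two (hsum f)⟩ : ℓ2)
      map_add' := fun f g => by
        apply lp.ext; funext n
        cases n with
        | zero => exact (add_zero (0:H₀)).symm
        | succ n => simp only [lp.coeFn_add, Pi.add_apply, podlesUpFun_succ, smul_add]
      map_smul' := fun s f => by
        apply lp.ext; funext n
        cases n with
        | zero => simp [lp.coeFn_smul, Pi.smul_apply]
        | succ n =>
          simp only [lp.coeFn_smul, Pi.smul_apply, RingHom.id_apply, podlesUpFun_succ]
          rw [smul_comm] }
    M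
    (fun f => podles_norm_le_bound _ f M hM0 (keyt f))

@[simp] lemma podlesUp_apply (w : ℕ → ℝ) (M : ℝ) (hM : ∀ n, |w n| ≤ M) (f : ℓ2) (n : ℕ) :
    (podlesUp w M hM f) n = podlesUpFun w (⇑f) n := rfl


section Adj

local notation "⟪" x ", " y "⟫" => @inner ℂ _ _ x y

lemma podlesDiag_isSelfAdjoint (w : ℕ → ℝ) (M : ℝ) (hM : ∀ n, |w n| ≤ M) :
    IsSelfAdjoint (podlesDiag (H₀ := H₀) w M hM) := by
  rw [ContinuousLinearMap.isSelfAdjoint_iff_isSymmetric]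
  intro x y
  show ⟪(podlesDiag w M hM x : ℓ2), y⟫ = ⟪(x : ℓ2), podlesDiag w M hM y⟫
  rw [lp.inner_eq_tsum, lp.inner_eq_tsum]
  refine tsum_congr fun n => ?_
  rw [podlesDiag_apply, podlesDiag_apply, inner_smul_left, inner_smul_right,
    Complex.conj_ofReal]

lemma podlesUp_eq_adjoint (w : ℕ → ℝ) (M : ℝ) (hM : ∀ n, |w n| ≤ M) :
    podlesUp (H₀ := H₀) w M hM = ContinuousLinearMap.adjoint (podlesDown w M hM) := by
  rw [ContinuousLinearMap.eq_adjoint_iff]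
  intro x y
  rw [lp.inner_eq_tsum, lp.inner_eq_tsum]
  have hs : Summable fun i => ⟪(podlesUp w M hM x : ℓ2) i, (y : ℓ2) i⟫ := lp.summable_inner _ _
  rw [hs.tsum_eq_zero_add]
  simp only [podlesUp_apply, podlesUpFun_zero, podlesUpFun_succ, inner_zero_left, zero_add,
    podlesDown_apply]
  refine tsum_congr fun n => ?_
  rw [inner_smul_left, inner_smul_right, Complex.conj_ofReal]

end Adj

end PodlesAux

set_option maxHeartbeats 1000000 in
/-- Podles' sphere representations: let `0 < q < 1`, `c ≥ 0`, `ε = ±1` (with `c > 0` if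
`ε = −1`), `λ_ε = 1/2 + ε (c + 1/4)^{1/2}` and
`c_ε(n) = (c + λ_ε q^{2n} − (λ_ε q^{2n})²)^{1/2}`.  Then there are bounded operators
`A, B` on `ℓ²(ℕ, H₀)`, `A` self-adjoint, with `A (eₙ η) = λ_ε q^{2n} eₙ η`,
`B (e₀ η) = 0`, `B (eₙ η) = c_ε(n) eₙ₋₁ η`, `B* (eₙ η) = c_ε(n+1) eₙ₊₁ η`, satisfying
`A B = q⁻² B A`, `A B* = q² B* A`, `B*B = A − A² + c·1`, `B B* = q² A − q⁴ A² + c·1`. -/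
theorem podles_sphere_representation
    {H₀ : Type*} [NormedAddCommGroup H₀] [InnerProductSpace ℂ H₀] [CompleteSpace H₀]
    (q c ε : ℝ) (hq0 : 0 < q) (hq1 : q < 1) (hc : 0 ≤ c)
    (hε : ε = 1 ∨ ε = -1) (hεc : ε = -1 → 0 < c)
    (lam : ℝ) (hlam : lam = 1 / 2 + ε * Real.sqrt (c + 1 / 4))
    (ce : ℕ → ℝ) (hce : ∀ n : ℕ, ce n = Real.sqrt (c + lam * q ^ (2 * n) - (lam * q ^ (2 * n)) ^ 2)) :
    ∃ A B : lp (fun _ : ℕ => H₀) 2 →L[ℂ] lp (fun _ : ℕ => H₀) 2,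
      IsSelfAdjoint A ∧
      (∀ (n : ℕ) (η : H₀),
        A (lp.single 2 n η) = ((lam * q ^ (2 * n) : ℝ) : ℂ) • lp.single 2 n η) ∧
      (∀ η : H₀, B (lp.single 2 0 η) = 0) ∧
      (∀ (n : ℕ) (η : H₀), 1 ≤ n →
        B (lp.single 2 n η) = ((ce n : ℝ) : ℂ) • lp.single 2 (n - 1) η) ∧
      (∀ (n : ℕ) (η : H₀),
        adjoint B (lp.single 2 n η) = ((ce (n + 1) : ℝ) : ℂ) • lp.single 2 (n + 1) η) ∧
      A ∘L B = (((q : ℂ) ^ 2)⁻¹) • (B ∘L A) ∧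
      A ∘L adjoint B = ((q : ℂ) ^ 2) • (adjoint B ∘L A) ∧
      adjoint B ∘L B = A - A ∘L A
        + (c : ℂ) • (1 : lp (fun _ : ℕ => H₀) 2 →L[ℂ] lp (fun _ : ℕ => H₀) 2) ∧
      B ∘L adjoint B = ((q : ℂ) ^ 2) • A - ((q : ℂ) ^ 4) • (A ∘L A)
        + (c : ℂ) • (1 : lp (fun _ : ℕ => H₀) 2 →L[ℂ] lp (fun _ : ℕ => H₀) 2) := by
  -- basic numerical facts
  have hq2 : (q : ℂ) ≠ 0 := by exact_mod_cast hq0.ne'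
  have hsqrt : Real.sqrt (c + 1 / 4) ^ 2 = c + 1 / 4 := Real.sq_sqrt (by linarith)
  have hε2 : ε ^ 2 = 1 := by rcases hε with h | h <;> rw [h] <;> norm_num
  have hlam2 : lam ^ 2 = lam + c := by
    rw [hlam]; linear_combination (c + 1 / 4) * hε2 + ε ^ 2 * hsqrt
  have ht0 : ∀ n : ℕ, 0 ≤ q ^ (2 * n) := fun n => pow_nonneg hq0.le _
  have ht1 : ∀ n : ℕ, q ^ (2 * n) ≤ 1 := fun n => pow_le_one₀ hq0.le hq1.le
  set a : ℕ → ℝ := fun n => lam * q ^ (2 * n) with ha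
  have hfact : ∀ n : ℕ, c + a n - (a n) ^ 2
      = c * (1 - q ^ (2 * n)) + lam ^ 2 * (q ^ (2 * n) * (1 - q ^ (2 * n))) := by
    intro n
    simp only [ha]
    linear_combination (-(q ^ (2 * n))) * hlam2
  have hgnn : ∀ n : ℕ, 0 ≤ c + a n - (a n) ^ 2 := by
    intro n
    rw [hfact n]
    have h1 := ht0 n; have h2 := ht1 n
    have e1 : 0 ≤ c * (1 - q ^ (2 * n)) := mul_nonneg hc (by linarith)
    have e2 : 0 ≤ lam ^ 2 * (q ^ (2 * n) * (1 - q ^ (2 * n))) :=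
      mul_nonneg (sq_nonneg lam) (mul_nonneg h1 (by linarith))
    linarith
  have hcesq : ∀ n : ℕ, ce n ^ 2 = c + a n - (a n) ^ 2 := by
    intro n; rw [hce n]; exact Real.sq_sqrt (hgnn n)
  have hcenn : ∀ n : ℕ, 0 ≤ ce n := fun n => by rw [hce n]; exact Real.sqrt_nonneg _
  -- bounds
  have hAbd : ∀ n : ℕ, |a n| ≤ |lam| := by
    intro n
    rw [abs_mul]
    calc |lam| * |q ^ (2 * n)| ≤ |lam| * 1 := by
          apply mul_le_mul_of_nonneg_left _ (abs_nonneg _)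
          rw [abs_of_nonneg (ht0 n)]; exact ht1 n
      _ = |lam| := mul_one _
  have hBbd : ∀ n : ℕ, |ce n| ≤ Real.sqrt (c + lam ^ 2) := by
    intro n
    rw [abs_of_nonneg (hcenn n), hce n]
    apply Real.sqrt_le_sqrt
    have h1 := ht0 n; have h2 := ht1 n
    have := hfact n
    simp only [ha] at this ⊢
    nlinarith [sq_nonneg lam]
  -- the operators
  set A : lp (fun _ : ℕ => H₀) 2 →L[ℂ] lp (fun _ : ℕ => H₀) 2 := podlesDiag a |lam| hAbd with hA
  set B : lp (fun _ : ℕ => H₀) 2 →L[ℂ] lp (fun _ : ℕ => H₀) 2 :=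
    podlesDown ce (Real.sqrt (c + lam ^ 2)) hBbd with hB
  have hadj : adjoint B = podlesUp ce (Real.sqrt (c + lam ^ 2)) hBbd :=
    (podlesUp_eq_adjoint ce (Real.sqrt (c + lam ^ 2)) hBbd).symm
  have hasucc : ∀ k : ℕ, a (k + 1) = q ^ 2 * a k := by
    intro k; simp only [ha]; ring
  refine ⟨A, B, podlesDiag_isSelfAdjoint a |lam| hAbd, ?_, ?_, ?_, ?_, ?_, ?_, ?_, ?_⟩
  · -- action of A on single
    intro n η
    apply lp.ext; funext k
    rw [hA, podlesDiag_apply, lp.coeFn_smul, Pi.smul_apply]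
    by_cases hk : k = n
    · subst hk; rw [lp.single_apply_self]
    · rw [lp.single_apply_ne _ _ _ hk, smul_zero, smul_zero]
  · -- B on single 0
    intro η
    apply lp.ext; funext k
    rw [hB, podlesDown_apply, lp.single_apply_ne _ _ _ (Nat.succ_ne_zero k), smul_zero]
    simp
  · -- B on single n, n ≥ 1
    intro n η hn
    apply lp.ext; funext k
    rw [hB, podlesDown_apply, lp.coeFn_smul, Pi.smul_apply]
    by_cases hk : k + 1 = n
    · subst hk
      rw [lp.single_apply_self, Nat.add_sub_cancel, lp.single_apply_self]
    · have hk' : k ≠ n - 1 := by omega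
      rw [lp.single_apply_ne _ _ _ hk, lp.single_apply_ne _ _ _ hk', smul_zero, smul_zero]
  · -- adjoint B on single
    intro n η
    rw [hadj]
    apply lp.ext; funext k
    rw [podlesUp_apply, lp.coeFn_smul, Pi.smul_apply]
    cases k with
    | zero =>
      rw [podlesUpFun_zero, lp.single_apply_ne _ _ _ (Nat.succ_ne_zero n).symm, smul_zero]
    | succ m =>
      rw [podlesUpFun_succ]
      by_cases hm : m = n
      · subst hm; rw [lp.single_apply_self, lp.single_apply_self]
      · rw [lp.single_apply_ne _ _ _ hm, lp.single_apply_ne _ _ _ (by omega : m + 1 ≠ n + 1),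
          smul_zero, smul_zero]
  · -- A B = q⁻² B A
    apply ContinuousLinearMap.ext; intro f
    apply lp.ext; funext k
    rw [ContinuousLinearMap.comp_apply, ContinuousLinearMap.smul_apply, lp.coeFn_smul,
      Pi.smul_apply, ContinuousLinearMap.comp_apply, hA, hB, podlesDiag_apply,
      podlesDown_apply, podlesDown_apply, podlesDiag_apply]
    rw [smul_smul, smul_smul, smul_smul]
    congr 1
    rw [hasucc k]
    push_cast
    field_simp
  · -- A B* = q² B* A
    rw [hadj]
    apply ContinuousLinearMap.ext; intro f
    apply lp.ext; funext k
    cases k with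
    | zero =>
      simp only [ContinuousLinearMap.coe_comp', Function.comp_apply,
        ContinuousLinearMap.smul_apply, lp.coeFn_smul, Pi.smul_apply, hA,
        podlesDiag_apply, podlesUp_apply, podlesUpFun_zero, smul_zero]
    | succ m =>
      simp only [ContinuousLinearMap.coe_comp', Function.comp_apply,
        ContinuousLinearMap.smul_apply, lp.coeFn_smul, Pi.smul_apply, hA,
        podlesDiag_apply, podlesUp_apply, podlesUpFun_succ]
      rw [smul_smul, smul_smul, smul_smul]
      congr 1
      rw [hasucc m]
      push_cast
      ring
  · -- B* B = A - A² + c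
    rw [hadj]
    apply ContinuousLinearMap.ext; intro f
    apply lp.ext; funext k
    cases k with
    | zero =>
      simp only [ContinuousLinearMap.coe_comp', Function.comp_apply,
        ContinuousLinearMap.add_apply, ContinuousLinearMap.sub_apply,
        ContinuousLinearMap.smul_apply, ContinuousLinearMap.one_apply,
        lp.coeFn_add, Pi.add_apply, lp.coeFn_sub, Pi.sub_apply, lp.coeFn_smul, Pi.smul_apply,
        hA, hB, podlesDiag_apply, podlesUp_apply, podlesUpFun_zero]
      rw [smul_smul, ← sub_smul, ← add_smul]
      have h0 : ((a 0 : ℂ) - (a 0 : ℂ) * (a 0 : ℂ) + (c : ℂ)) = 0 := by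
        have hr0 : a 0 - a 0 * a 0 + c = 0 := by
          simp only [ha, mul_zero, pow_zero, mul_one]
          nlinarith [hlam2]
        exact_mod_cast congrArg (fun x : ℝ => (x : ℂ)) hr0
      rw [h0, zero_smul]
    | succ m =>
      simp only [ContinuousLinearMap.coe_comp', Function.comp_apply,
        ContinuousLinearMap.add_apply, ContinuousLinearMap.sub_apply,
        ContinuousLinearMap.smul_apply, ContinuousLinearMap.one_apply,
        lp.coeFn_add, Pi.add_apply, lp.coeFn_sub, Pi.sub_apply, lp.coeFn_smul, Pi.smul_apply,
        hA, hB, podlesDiag_apply, podlesUp_apply, podlesUpFun_succ, podlesDown_apply]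
      rw [smul_smul, smul_smul, ← sub_smul, ← add_smul]
      congr 1
      have hr : ce (m + 1) * ce (m + 1) = a (m + 1) - a (m + 1) * a (m + 1) + c := by
        nlinarith [hcesq (m + 1)]
      exact_mod_cast congrArg (fun x : ℝ => (x : ℂ)) hr
  · -- B B* = q² A - q⁴ A² + c
    rw [hadj]
    apply ContinuousLinearMap.ext; intro f
    apply lp.ext; funext k
    simp only [ContinuousLinearMap.coe_comp', Function.comp_apply,
      ContinuousLinearMap.add_apply, ContinuousLinearMap.sub_apply,
      ContinuousLinearMap.smul_apply, ContinuousLinearMap.one_apply,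
      lp.coeFn_add, Pi.add_apply, lp.coeFn_sub, Pi.sub_apply, lp.coeFn_smul, Pi.smul_apply,
      hA, hB, podlesDiag_apply, podlesUp_apply, podlesUpFun_succ, podlesDown_apply]
    simp only [smul_smul]
    rw [← sub_smul, ← add_smul]
    congr 1
    have hr : ce (k + 1) * ce (k + 1)
        = q ^ 2 * a k - q ^ 4 * (a k * a k) + c := by
      have h1 := hcesq (k + 1)
      have h2 := hasucc k
      nlinarith [h1, h2]
    exact_mod_cast hr
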